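/- Let A be an m×n real matrix whose columns have ℓ2-norm 1, let s ∈ {1,…,n} with s ≤ n−1, and let τ > 0. Assume μ₁(A, s−1) + τ·√s·μ₁(A, s) < 1. Then for every x ∈ ℝ^n and every index set S ⊆ {1,…,n} with |S| ≤ s and ‖x_{S^c}‖₁ ≤ τ‖x_S‖₁, one has ‖Ax‖₂ ≥ [ (1 − μ₁(A,s−1) − τ√s·μ₁(A,s)) / √(1 + μ₁(A,s−1)) ]·‖x_S‖₂. In particular A satisfies the restricted eigenvalue condition of order s and τ with K(s,τ,A) ≥ (1 − μ₁(A,s−1) − τ√s·μ₁(A,s)) / √(1 + μ₁(A,s−1)). -/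
import Mathlib

open scoped Classical

/-- Cumulative coherence function μ₁(A, s). -/
noncomputable def mu1 {m n : ℕ} (A : Matrix (Fin m) (Fin n) ℝ) (s : ℕ) : ℝ :=
  sSup {t : ℝ | ∃ S : Finset (Fin n), S.card ≤ s ∧ ∃ i : Fin n, i ∉ S ∧
    t = ∑ j ∈ S, |∑ k : Fin m, A k i * A k j|}

lemma abs_gram_le_one {m n : ℕ} (A : Matrix (Fin m) (Fin n) ℝ)
    (hA : ∀ j, ∑ k, (A k j) ^ 2 = 1) (i j : Fin n) :
    |∑ k : Fin m, A k i * A k j| ≤ 1 := by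
  have h := Finset.sum_mul_sq_le_sq_mul_sq Finset.univ (fun k => A k i) (fun k => A k j)
  rw [hA i, hA j] at h
  nlinarith [abs_nonneg (∑ k : Fin m, A k i * A k j), sq_abs (∑ k : Fin m, A k i * A k j)]

lemma mu1_bdd {m n : ℕ} (A : Matrix (Fin m) (Fin n) ℝ)
    (hA : ∀ j, ∑ k, (A k j) ^ 2 = 1) (s : ℕ) :
    BddAbove {t : ℝ | ∃ S : Finset (Fin n), S.card ≤ s ∧ ∃ i : Fin n, i ∉ S ∧
      t = ∑ j ∈ S, |∑ k : Fin m, A k i * A k j|} := by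
  refine ⟨(s : ℝ), ?_⟩
  rintro t ⟨S, hS, i, hi, rfl⟩
  calc ∑ j ∈ S, |∑ k : Fin m, A k i * A k j| ≤ ∑ j ∈ S, (1:ℝ) :=
        Finset.sum_le_sum fun j _ => abs_gram_le_one A hA i j
    _ = (S.card : ℝ) := by simp
    _ ≤ (s : ℝ) := by exact_mod_cast hS

lemma mu1_ge {m n : ℕ} (A : Matrix (Fin m) (Fin n) ℝ)
    (hA : ∀ j, ∑ k, (A k j) ^ 2 = 1) (s : ℕ) (S : Finset (Fin n)) (hS : S.card ≤ s)
    (i : Fin n) (hi : i ∉ S) :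
    ∑ j ∈ S, |∑ k : Fin m, A k i * A k j| ≤ mu1 A s :=
  le_csSup (mu1_bdd A hA s) ⟨S, hS, i, hi, rfl⟩

lemma mu1_nonneg {m n : ℕ} (A : Matrix (Fin m) (Fin n) ℝ)
    (hA : ∀ j, ∑ k, (A k j) ^ 2 = 1) (s : ℕ) (hn : 0 < n) :
    0 ≤ mu1 A s := by
  simpa using mu1_ge A hA s ∅ (by simp) ⟨0, hn⟩ (by simp)

lemma exchange {m n : ℕ} (A : Matrix (Fin m) (Fin n) ℝ) (x : Fin n → ℝ)
    (S T : Finset (Fin n)) :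
    (∑ k : Fin m, (∑ i ∈ S, A k i * x i) * (∑ j ∈ T, A k j * x j))
      = ∑ i ∈ S, ∑ j ∈ T, x i * x j * (∑ k : Fin m, A k i * A k j) := by
  calc (∑ k : Fin m, (∑ i ∈ S, A k i * x i) * (∑ j ∈ T, A k j * x j))
      = ∑ k : Fin m, ∑ i ∈ S, ∑ j ∈ T, (x i * x j) * (A k i * A k j) := by
        refine Finset.sum_congr rfl fun k _ => ?_
        rw [Finset.sum_mul_sum]
        exact Finset.sum_congr rfl fun i _ => Finset.sum_congr rfl fun j _ => by ring
    _ = ∑ i ∈ S, ∑ k : Fin m, ∑ j ∈ T, (x i * x j) * (A k i * A k j) :=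
        Finset.sum_comm
    _ = ∑ i ∈ S, ∑ j ∈ T, ∑ k : Fin m, (x i * x j) * (A k i * A k j) :=
        Finset.sum_congr rfl fun i _ => Finset.sum_comm
    _ = ∑ i ∈ S, ∑ j ∈ T, x i * x j * (∑ k : Fin m, A k i * A k j) := by
        refine Finset.sum_congr rfl fun i _ => Finset.sum_congr rfl fun j _ => ?_
        rw [Finset.mul_sum]

set_option maxHeartbeats 1000000 in
/-- Cumulative coherence implies the restricted eigenvalue condition: if
`μ₁(s−1) + τ√s μ₁(s) < 1`, then for every `x` and every `S` with `|S| ≤ s` and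
`‖x_{Sᶜ}‖₁ ≤ τ‖x_S‖₁`,
`‖Ax‖₂ ≥ [(1 − μ₁(s−1) − τ√s μ₁(s)) / √(1 + μ₁(s−1))] ‖x_S‖₂`; hence `A` satisfies the
RE-condition of order `s` and `τ` with `K(s,τ) ≥ (1 − μ₁(s−1) − τ√s μ₁(s))/√(1 + μ₁(s−1))`. -/
theorem stmt15 {m n : ℕ} (A : Matrix (Fin m) (Fin n) ℝ)
    (hA : ∀ j, ∑ k, (A k j) ^ 2 = 1)
    (s : ℕ) (hs1 : 1 ≤ s) (hsn : s ≤ n - 1)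
    (τ : ℝ) (hτ : 0 < τ)
    (hcond : mu1 A (s - 1) + τ * Real.sqrt s * mu1 A s < 1) :
    ∀ x : Fin n → ℝ, ∀ S : Finset (Fin n), S.card ≤ s →
      (∑ j ∈ Sᶜ, |x j|) ≤ τ * ∑ j ∈ S, |x j| →
      Real.sqrt (∑ k, (A.mulVec x k) ^ 2) ≥
        (1 - mu1 A (s - 1) - τ * Real.sqrt s * mu1 A s) /
            Real.sqrt (1 + mu1 A (s - 1)) *
          Real.sqrt (∑ j ∈ S, (x j) ^ 2) := by
  intro x S hScard hTail
  have hn : 0 < n := by omega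
  set μm := mu1 A (s - 1) with hμmdef
  set μs := mu1 A s with hμsdef
  have hμm0 : 0 ≤ μm := mu1_nonneg A hA _ hn
  have hμs0 : 0 ≤ μs := mu1_nonneg A hA _ hn
  set G : Fin n → Fin n → ℝ := fun i j => ∑ k, A k i * A k j with hGdef
  have hGsymm : ∀ i j, G i j = G j i := fun i j =>
    Finset.sum_congr rfl fun k _ => mul_comm _ _
  have hGdiag : ∀ i, G i i = 1 := fun i => by simpa [hGdef, sq] using hA i
  set Q : ℝ := ∑ j ∈ S, (x j) ^ 2 with hQdef
  have hQ0 : 0 ≤ Q := Finset.sum_nonneg fun j _ => sq_nonneg _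
  set sq2 : ℝ := Real.sqrt Q with hsqQdef
  have hsq20 : 0 ≤ sq2 := Real.sqrt_nonneg _
  set N : ℝ := Real.sqrt (∑ k, (A.mulVec x k) ^ 2) with hNdef
  have hN0 : 0 ≤ N := Real.sqrt_nonneg _
  set cnum : ℝ := 1 - μm - τ * Real.sqrt s * μs with hcnumdef
  have hcnum0 : 0 < cnum := by simp only [hcnumdef]; linarith
  have key : ∀ T : Finset (Fin n),
      (∑ k, (∑ i ∈ S, A k i * x i) * (∑ j ∈ T, A k j * x j))
        = ∑ i ∈ S, ∑ j ∈ T, x i * x j * G i j := fun T => exchange A x S T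
  set P : ℝ := ∑ i ∈ S, ∑ j ∈ S, x i * x j * G i j with hPdef
  set C : ℝ := ∑ i ∈ S, ∑ j ∈ Sᶜ, x i * x j * G i j with hCdef
  have hP0 : 0 ≤ P := by
    rw [hPdef, ← key S]
    exact Finset.sum_nonneg fun k _ => by rw [← sq]; exact sq_nonneg _
  have hmv : ∀ k, A.mulVec x k = ∑ j : Fin n, A k j * x j := by
    intro k; simp [Matrix.mulVec, dotProduct]
  have hT : (∑ k, (∑ i ∈ S, A k i * x i) * A.mulVec x k) = P + C := by
    have h1 : (∑ k, (∑ i ∈ S, A k i * x i) * A.mulVec x k)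
        = ∑ i ∈ S, ∑ j : Fin n, x i * x j * G i j := by
      rw [← key Finset.univ]
      exact Finset.sum_congr rfl fun k _ => by rw [hmv k]
    have h2 : ∑ i ∈ S, ∑ j : Fin n, x i * x j * G i j = P + C := by
      rw [hPdef, hCdef, ← Finset.sum_add_distrib]
      exact Finset.sum_congr rfl fun i _ => (Finset.sum_add_sum_compl S _).symm
    rw [h1, h2]
  have habs_le : ∀ i ∈ S, |x i| ≤ sq2 := by
    intro i hi
    rw [hsqQdef, ← Real.sqrt_sq_eq_abs]
    exact Real.sqrt_le_sqrt (Finset.single_le_sum (fun j _ => sq_nonneg (x j)) hi)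
  set D : ℝ := ∑ i ∈ S, ∑ j ∈ S \ {i}, x i * x j * G i j with hDdef
  have hPQD : P = Q + D := by
    rw [hPdef, hQdef, hDdef, ← Finset.sum_add_distrib]
    refine Finset.sum_congr rfl fun i hi => ?_
    rw [Finset.sum_eq_sum_sdiff_singleton_add hi (fun j => x i * x j * G i j),
      hGdiag i]
    ring
  have hmuS : ∀ i ∈ S, ∑ j ∈ S \ {i}, |G i j| ≤ μm := by
    intro i hi
    have hcard : (S \ {i}).card ≤ s - 1 := by
      rw [Finset.sdiff_singleton_eq_erase, Finset.card_erase_of_mem hi]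
      omega
    have := mu1_ge A hA (s-1) (S \ {i}) hcard i (by simp)
    simpa [hGdef] using this
  have hDbound : |D| ≤ μm * Q := by
    have h1 : |D| ≤ ∑ i ∈ S, ∑ j ∈ S \ {i}, |x i| * |x j| * |G i j| := by
      refine (Finset.abs_sum_le_sum_abs _ _).trans (Finset.sum_le_sum fun i _ => ?_)
      refine (Finset.abs_sum_le_sum_abs _ _).trans (Finset.sum_le_sum fun j _ => ?_)
      rw [abs_mul, abs_mul]
    have h2 : ∑ i ∈ S, ∑ j ∈ S \ {i}, |x i| * |x j| * |G i j|
        ≤ ∑ i ∈ S, ∑ j ∈ S \ {i},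
            ((x i)^2 / 2 * |G i j| + (x j)^2 / 2 * |G i j|) := by
      refine Finset.sum_le_sum fun i _ => Finset.sum_le_sum fun j _ => ?_
      nlinarith [abs_nonneg (G i j), sq_abs (x i), sq_abs (x j), sq_nonneg (|x i| - |x j|)]
    have h3 : ∑ i ∈ S, ∑ j ∈ S \ {i}, (x j)^2 / 2 * |G i j|
        = ∑ i ∈ S, ∑ j ∈ S \ {i}, (x i)^2 / 2 * |G i j| := by
      rw [Finset.sum_comm' (t' := S) (s' := fun j => S \ {j})]
      · exact Finset.sum_congr rfl fun i _ => Finset.sum_congr rfl fun j _ => by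
          rw [hGsymm]
      · intro i j
        simp only [Finset.mem_sdiff, Finset.mem_singleton]
        tauto
    have h4 : ∑ i ∈ S, ∑ j ∈ S \ {i}, (x i)^2 * |G i j| ≤ μm * Q := by
      rw [hQdef, Finset.mul_sum]
      refine Finset.sum_le_sum fun i hi => ?_
      rw [← Finset.mul_sum, mul_comm μm _]
      exact mul_le_mul_of_nonneg_left (hmuS i hi) (sq_nonneg _)
    calc |D| ≤ ∑ i ∈ S, ∑ j ∈ S \ {i},
            ((x i)^2 / 2 * |G i j| + (x j)^2 / 2 * |G i j|) := h1.trans h2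
      _ = ∑ i ∈ S, ∑ j ∈ S \ {i}, (x i)^2 * |G i j| := by
          simp only [Finset.sum_add_distrib]
          rw [h3, ← Finset.sum_add_distrib]
          refine Finset.sum_congr rfl fun i _ => ?_
          rw [← Finset.sum_add_distrib]
          exact Finset.sum_congr rfl fun j _ => by ring
      _ ≤ μm * Q := h4
  have hCrossMu : ∀ j, j ∉ S → ∑ i ∈ S, |G i j| ≤ μs := by
    intro j hj
    have h := mu1_ge A hA s S hScard j hj
    calc ∑ i ∈ S, |G i j| = ∑ i ∈ S, |G j i| :=
          Finset.sum_congr rfl fun i _ => by rw [hGsymm]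
      _ ≤ μs := by simpa [hGdef] using h
  have hL1 : ∑ j ∈ S, |x j| ≤ Real.sqrt s * sq2 := by
    have h := Finset.sum_mul_sq_le_sq_mul_sq S (fun j => |x j|) (fun _ => (1:ℝ))
    simp only [mul_one, one_pow, Finset.sum_const, nsmul_eq_mul] at h
    have h' : (∑ j ∈ S, |x j|)^2 ≤ (s : ℝ) * Q := by
      rw [hQdef]
      calc (∑ j ∈ S, |x j|)^2 ≤ (∑ j ∈ S, |x j|^2) * S.card := h
        _ = S.card * ∑ j ∈ S, (x j)^2 := by
            rw [mul_comm]; congr 1; exact Finset.sum_congr rfl fun j _ => sq_abs _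
        _ ≤ (s:ℝ) * ∑ j ∈ S, (x j)^2 := by
            apply mul_le_mul_of_nonneg_right _
              (Finset.sum_nonneg fun j _ => sq_nonneg _)
            exact_mod_cast hScard
    have hsum0 : 0 ≤ ∑ j ∈ S, |x j| := Finset.sum_nonneg fun j _ => abs_nonneg _
    calc ∑ j ∈ S, |x j| = Real.sqrt ((∑ j ∈ S, |x j|)^2) := (Real.sqrt_sq hsum0).symm
      _ ≤ Real.sqrt ((s:ℝ) * Q) := Real.sqrt_le_sqrt h'
      _ = Real.sqrt s * sq2 := by rw [Real.sqrt_mul (by positivity)]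
  have hCbound : |C| ≤ τ * Real.sqrt s * μs * Q := by
    have hswap : C = ∑ j ∈ Sᶜ, ∑ i ∈ S, x i * x j * G i j := by
      rw [hCdef]; exact Finset.sum_comm
    have h1 : |C| ≤ ∑ j ∈ Sᶜ, |x j| * (sq2 * μs) := by
      rw [hswap]
      refine (Finset.abs_sum_le_sum_abs _ _).trans (Finset.sum_le_sum fun j hj => ?_)
      have hj' : j ∉ S := by simpa using hj
      calc |∑ i ∈ S, x i * x j * G i j| ≤ ∑ i ∈ S, |x i| * |x j| * |G i j| := by
            refine (Finset.abs_sum_le_sum_abs _ _).trans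
              (Finset.sum_le_sum fun i _ => ?_)
            rw [abs_mul, abs_mul]
        _ ≤ ∑ i ∈ S, sq2 * |x j| * |G i j| := by
            refine Finset.sum_le_sum fun i hi => ?_
            exact mul_le_mul_of_nonneg_right
              (mul_le_mul_of_nonneg_right (habs_le i hi) (abs_nonneg _))
              (abs_nonneg _)
        _ = |x j| * sq2 * ∑ i ∈ S, |G i j| := by
            rw [Finset.mul_sum]
            exact Finset.sum_congr rfl fun i _ => by ring
        _ ≤ |x j| * sq2 * μs := by
            apply mul_le_mul_of_nonneg_left (hCrossMu j hj')
            positivity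
        _ = |x j| * (sq2 * μs) := by ring
    have h2 : ∑ j ∈ Sᶜ, |x j| * (sq2 * μs) = (∑ j ∈ Sᶜ, |x j|) * (sq2 * μs) := by
      rw [Finset.sum_mul]
    have h3 : (∑ j ∈ Sᶜ, |x j|) * (sq2 * μs) ≤ (τ * (Real.sqrt s * sq2)) * (sq2 * μs) := by
      apply mul_le_mul_of_nonneg_right _ (by positivity)
      calc (∑ j ∈ Sᶜ, |x j|) ≤ τ * ∑ j ∈ S, |x j| := hTail
        _ ≤ τ * (Real.sqrt s * sq2) := mul_le_mul_of_nonneg_left hL1 hτ.le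
    have hQsq : sq2 * sq2 = Q := Real.mul_self_sqrt hQ0
    calc |C| ≤ (∑ j ∈ Sᶜ, |x j|) * (sq2 * μs) := by rw [← h2]; exact h1
      _ ≤ (τ * (Real.sqrt s * sq2)) * (sq2 * μs) := h3
      _ = τ * Real.sqrt s * μs * (sq2 * sq2) := by ring
      _ = τ * Real.sqrt s * μs * Q := by rw [hQsq]
  have hTlow : cnum * Q ≤ P + C := by
    have hD := neg_abs_le D
    have hC := neg_abs_le C
    rw [hcnumdef, hPQD]
    nlinarith [hDbound, hCbound]
  have hCS : P + C ≤ Real.sqrt P * N := by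
    rw [← hT]
    have h := Finset.sum_mul_sq_le_sq_mul_sq Finset.univ
      (fun k => ∑ i ∈ S, A k i * x i) (fun k => A.mulVec x k)
    have hPeq : (∑ k, (∑ i ∈ S, A k i * x i)^2) = P := by
      rw [hPdef, ← key S]
      exact Finset.sum_congr rfl fun k _ => sq _
    have hNsum0 : 0 ≤ ∑ k, (A.mulVec x k)^2 := Finset.sum_nonneg fun k _ => sq_nonneg _
    have hNeq : (∑ k, (A.mulVec x k)^2) = N^2 := (Real.sq_sqrt hNsum0).symm
    rw [hPeq, hNeq] at h
    calc (∑ k, (∑ i ∈ S, A k i * x i) * A.mulVec x k)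
        ≤ |∑ k, (∑ i ∈ S, A k i * x i) * A.mulVec x k| := le_abs_self _
      _ = Real.sqrt ((∑ k, (∑ i ∈ S, A k i * x i) * A.mulVec x k)^2) :=
          (Real.sqrt_sq_eq_abs _).symm
      _ ≤ Real.sqrt (P * N^2) := Real.sqrt_le_sqrt h
      _ = Real.sqrt P * N := by rw [Real.sqrt_mul hP0, Real.sqrt_sq hN0]
  have hPup : Real.sqrt P ≤ Real.sqrt (1 + μm) * sq2 := by
    have hP' : P ≤ (1 + μm) * Q := by
      have := le_abs_self D
      rw [hPQD]; nlinarith [hDbound]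
    calc Real.sqrt P ≤ Real.sqrt ((1 + μm) * Q) := Real.sqrt_le_sqrt hP'
      _ = Real.sqrt (1 + μm) * sq2 := by rw [Real.sqrt_mul (by linarith)]
  have hchain : cnum * Q ≤ Real.sqrt (1 + μm) * sq2 * N :=
    hTlow.trans (hCS.trans (mul_le_mul_of_nonneg_right hPup hN0))
  have h1p : 0 < Real.sqrt (1 + μm) := Real.sqrt_pos.mpr (by linarith)
  rcases eq_or_lt_of_le hQ0 with hQz | hQpos
  · have hz : sq2 = 0 := by rw [hsqQdef, ← hQz, Real.sqrt_zero]
    rw [ge_iff_le, hz, mul_zero]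
    exact hN0
  · have hsq2pos : 0 < sq2 := Real.sqrt_pos.mpr hQpos
    rw [ge_iff_le, div_mul_eq_mul_div, div_le_iff₀ h1p]
    have hQsq : Q = sq2 * sq2 := (Real.mul_self_sqrt hQ0).symm
    rw [hQsq] at hchain
    nlinarith [hchain, hsq2pos, hN0, h1p.le]
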